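/- arXiv:2511.19293 — 7 statements merged into one kernel-verified Lean document; each statement's English description precedes it below -/
import Mathlib

section
/- Let α be a non-empty word with reduction-factorization α = α_L α_R (α_R the greatest suffix of α w.r.t. ≺_r), and let m = o(m_α) where m_α is the greatest letter occurring in α. Then: (a) m does not occur in α_L, and if m ∈ D then m* does not occur in α_L; moreover o(α_R) = o(m_{α_R}) = m; (b) o(α) = m if and only if α_R = α. -/
/-- The alphabet `X = O ∪ D*`: the original set `O` together with a disjoint mirror copy `D*`
of the subset `D ⊆ O`. -/
abbrev Letter {O : Type*} (D : Set O) : Type _ := O ⊕ {x : O // x ∈ D}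

/-- The original element `o(x) ∈ O` of a letter `x ∈ X = O ∪ D*`. -/
def orig {O : Type*} {D : Set O} : Letter D → O
  | Sum.inl x => x
  | Sum.inr x => x.1

/-- The order `≺` on `X = O ∪ D*`: `x ≺ y` iff `o(x) <_O o(y)`, or `o(x) = o(y) = x` and
`y = x*` (i.e. `x` is original and `y` is its mirror). -/
def precX {O : Type*} [LinearOrder O] {D : Set O} (x y : Letter D) : Prop :=
  orig x < orig y ∨ (orig x = orig y ∧ x.isLeft = true ∧ y.isRight = true)

/-- The reduction order `≺_r` on words: `1 ≺_r α` for every non-empty `α`, and for non-empty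
words, first compare the original element of the first letter, then the length, then the
lexicographic order induced by `≺`. -/
def rlt {O : Type*} [LinearOrder O] {D : Set O} : List (Letter D) → List (Letter D) → Prop
  | _, [] => False
  | [], _ :: _ => True
  | x :: α, y :: β =>
      orig x < orig y ∨ (orig x = orig y ∧
        ((x :: α).length < (y :: β).length ∨
         ((x :: α).length = (y :: β).length ∧ List.Lex precX (x :: α) (y :: β))))

/-- `αR` is the greatest suffix of `α` with respect to the reduction order `≺_r`.  The
reduction-factorization of `α` is `α = αL ++ αR` with `αR` its greatest suffix. -/
def GreatestSuffix {O : Type*} [LinearOrder O] {D : Set O} (α αR : List (Letter D)) : Prop :=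
  αR <:+ α ∧ ∀ β, β <:+ α → β ≠ αR → rlt β αR

/-- `m` is the greatest letter occurring in the word `α` (with respect to `≺`). -/
def IsMaxLetter {O : Type*} [LinearOrder O] {D : Set O} (α : List (Letter D))
    (m : Letter D) : Prop :=
  m ∈ α ∧ ∀ b ∈ α, b = m ∨ precX b m

/-- A non-empty word `α` is prime if `α_R = α` in its reduction-factorization, i.e. `α` is the
greatest suffix of itself with respect to `≺_r`. -/
def IsPrimeWord {O : Type*} [LinearOrder O] {D : Set O} (α : List (Letter D)) : Prop :=
  α ≠ [] ∧ GreatestSuffix α α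

private lemma rlt_cons_cons {O : Type*} [LinearOrder O] {D : Set O} (x y : Letter D)
    (a b : List (Letter D)) :
    rlt (x :: a) (y :: b) ↔ orig x < orig y ∨ (orig x = orig y ∧
      ((x :: a).length < (y :: b).length ∨
       ((x :: a).length = (y :: b).length ∧ List.Lex precX (x :: a) (y :: b)))) := Iff.rfl

private lemma rlt_nil {O : Type*} [LinearOrder O] {D : Set O} (a : List (Letter D)) :
    ¬ rlt a [] := by
  cases a <;> exact fun h => h

/-- Let `α` be a non-empty word with reduction-factorization `α = αL ++ αR`
(`αR` the greatest suffix of `α` w.r.t. `≺_r`), and let `m = o(m_α)` with `m_α` the greatest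
letter of `α`.  Then: (a) `m` does not occur in `αL`, and if `m ∈ D` then `m*` does not occur
in `αL`; moreover `αR` is non-empty with `o(αR) = m` and the greatest letter of `αR` has
original element `m`; (b) `o(α) = m` iff `αR = α`. -/
theorem redFactorization_props {O : Type*} [LinearOrder O] [WellFoundedLT O] {D : Set O}
    (α αL αR : List (Letter D)) (mα : Letter D) (hα : α ≠ []) (hfac : α = αL ++ αR)
    (hR : GreatestSuffix α αR) (hm : IsMaxLetter α mα) :
    ((Sum.inl (orig mα) ∉ αL) ∧
      (∀ hD : orig mα ∈ D, Sum.inr ⟨orig mα, hD⟩ ∉ αL) ∧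
      (∃ hαR : αR ≠ [], orig (αR.head hαR) = orig mα ∧
        ∀ m', IsMaxLetter αR m' → orig m' = orig mα)) ∧
    (orig (α.head hα) = orig mα ↔ αR = α) := by
  obtain ⟨hsuf, hgreat⟩ := hR
  obtain ⟨hmem, hmax⟩ := hm
  have hle : ∀ b ∈ α, orig b ≤ orig mα := by
    intro b hb
    rcases hmax b hb with rfl | (h | ⟨h, _⟩)
    · exact le_rfl
    · exact le_of_lt h
    · exact le_of_eq h
  have hαRne : αR ≠ [] := by
    rintro rfl
    exact rlt_nil α (hgreat α List.suffix_rfl hα)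
  obtain ⟨r, rT, rfl⟩ := List.exists_cons_of_ne_nil hαRne
  have hrα : r ∈ α := hsuf.subset (List.mem_cons_self)
  have h1 : orig r ≤ orig mα := hle r hrα
  have h2 : orig mα ≤ orig r := by
    obtain ⟨s, t, hst⟩ := List.append_of_mem hmem
    have hsuf2 : mα :: t <:+ α := ⟨s, hst.symm⟩
    by_cases heq : mα :: t = r :: rT
    · exact le_of_eq (congrArg orig (List.cons_eq_cons.mp heq).1)
    · rcases (rlt_cons_cons ..).mp (hgreat _ hsuf2 heq) with h | ⟨h, _⟩
      · exact le_of_lt h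
      · exact le_of_eq h
  have hmr : orig r = orig mα := le_antisymm h1 h2
  have hnoL : ∀ y ∈ αL, orig y ≠ orig mα := by
    intro y hy hoy
    obtain ⟨s, t, hst⟩ := List.append_of_mem hy
    have hsuf3 : y :: (t ++ r :: rT) <:+ α := by
      refine ⟨s, ?_⟩
      rw [hfac, hst]
      simp
    have hne : y :: (t ++ r :: rT) ≠ r :: rT := by
      intro h
      have := congrArg List.length h
      simp at this
      omega
    rcases (rlt_cons_cons ..).mp (hgreat _ hsuf3 hne) with h | ⟨_, h' | ⟨h', _⟩⟩
    · rw [hoy, ← hmr] at h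
      exact lt_irrefl _ h
    · simp at h'
      omega
    · simp at h'
      omega
  refine ⟨⟨?_, ?_, hαRne, hmr, ?_⟩, ?_, ?_⟩
  · intro h
    exact hnoL _ h rfl
  · intro hD h
    exact hnoL _ h rfl
  · rintro m' ⟨hm'mem, hm'max⟩
    have hub : orig m' ≤ orig mα := hle m' (hsuf.subset hm'mem)
    have hlb : orig r ≤ orig m' := by
      rcases hm'max r (List.mem_cons_self) with rfl | (h | ⟨h, _⟩)
      · exact le_rfl
      · exact le_of_lt h
      · exact le_of_eq h
    exact le_antisymm hub (hmr ▸ hlb)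
  · intro hho
    by_contra hne
    have h := hgreat α List.suffix_rfl (fun h => hne h.symm)
    obtain ⟨x, a, rfl⟩ := List.exists_cons_of_ne_nil hα
    have hLne : αL ≠ [] := by
      rintro rfl
      exact hne (by simpa using hfac.symm)
    have hlen : (x :: a).length = αL.length + (r :: rT).length := by
      rw [hfac]; simp
    rcases (rlt_cons_cons ..).mp h with h | ⟨_, h' | ⟨h', _⟩⟩
    · simp only [List.head_cons] at hho
      rw [hho, ← hmr] at h
      exact lt_irrefl _ h
    · have : 1 ≤ αL.length := List.length_pos_iff.mpr hLne
      simp at hlen h'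
      omega
    · have : 1 ≤ αL.length := List.length_pos_iff.mpr hLne
      simp at hlen h'
      omega
  · rintro rfl
    have hL : αL = [] := by
      have := congrArg List.length hfac
      simp at this
      exact this
    subst hL
    simpa using hmr
end

section
/- Let α be a non-empty word with reduction-factorization α = α_L α_R. Then α_R is the greatest factor of itself with respect to the reduction order; consequently, α_R is the greatest factor of α with respect to the reduction order. -/
/-- Let `α` be a non-empty word with reduction-factorization `α = αL ++ αR`.
Then `αR` is the greatest factor of itself w.r.t. the reduction order, and consequently `αR`
is the greatest factor of `α` w.r.t. the reduction order. -/
theorem redFactor_greatest_factor {O : Type*} [LinearOrder O] [WellFoundedLT O] {D : Set O}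
    (α αL αR : List (Letter D)) (hα : α ≠ []) (hfac : α = αL ++ αR)
    (hR : GreatestSuffix α αR) :
    (∀ γ β η : List (Letter D), αR = γ ++ β ++ η → β ≠ αR → rlt β αR) ∧
      (∀ γ β η : List (Letter D), α = γ ++ β ++ η → β ≠ αR → rlt β αR) := by
  obtain ⟨hsuf, hgr⟩ := hR
  have hRne : αR ≠ [] := by
    intro h
    subst h
    have := hgr α (List.suffix_refl α) hα
    cases α <;> exact this
  obtain ⟨r, rs, hRR⟩ : ∃ r rs, αR = r :: rs := by
    cases αR with
    | nil => exact absurd rfl hRne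
    | cons a l => exact ⟨a, l, rfl⟩
  have key : ∀ β η : List (Letter D), β ++ η <:+ α → β ≠ αR → rlt β αR := by
    intro β η hsuf' hne
    cases β with
    | nil => rw [hRR]; trivial
    | cons x β' =>
      by_cases hEq : (x :: β') ++ η = αR
      · -- heads equal, η ≠ []
        rw [hRR] at hEq ⊢
        simp only [List.cons_append, List.cons.injEq] at hEq
        obtain ⟨hx, hβ⟩ := hEq
        have hη : η ≠ [] := by
          intro h
          apply hne
          rw [hRR, hx]
          rw [h, List.append_nil] at hβ
          rw [hβ]
        right
        refine ⟨by rw [hx], Or.inl ?_⟩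
        simp only [List.length_cons]
        have : β'.length < rs.length := by
          rw [← hβ, List.length_append]
          have : 0 < η.length := List.length_pos_iff.mpr hη
          omega
        omega
      · have h := hgr ((x :: β') ++ η) hsuf' hEq
        rw [hRR] at h ⊢
        simp only [List.cons_append] at h
        rcases h with h | ⟨he, hlen | ⟨hlen, hlex⟩⟩
        · exact Or.inl h
        · right
          refine ⟨he, Or.inl ?_⟩
          simp only [List.length_cons, List.length_append] at hlen ⊢
          omega
        · cases η with
          | nil =>
            right
            rw [List.append_nil] at hlen hlex
            exact ⟨he, Or.inr ⟨hlen, hlex⟩⟩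
          | cons e es =>
            right
            refine ⟨he, Or.inl ?_⟩
            simp only [List.length_cons, List.length_append] at hlen ⊢
            omega
  constructor
  · intro γ β η h hne
    have : β ++ η <:+ α := List.IsSuffix.trans ⟨γ, by rw [← List.append_assoc, ← h]⟩ hsuf
    exact key β η this hne
  · intro γ β η h hne
    exact key β η ⟨γ, by rw [← List.append_assoc, ← h]⟩ hne
end

section
/- If w₁ and w₂ are prime words with w₁ ⪰_r w₂, then the concatenation w = w₁w₂ is also a prime word, and w ≻_r w₁ ⪰_r w₂. -/
private lemma rlt_of_head_len {O : Type*} [LinearOrder O] {D : Set O}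
    {x y : Letter D} {α β : List (Letter D)}
    (h : orig x < orig y ∨ (orig x = orig y ∧ (x::α).length < (y::β).length)) :
    rlt (x::α) (y::β) := by
  rcases h with h | ⟨h1, h2⟩
  · exact Or.inl h
  · exact Or.inr ⟨h1, Or.inl h2⟩

private lemma head_le_of_rlt {O : Type*} [LinearOrder O] {D : Set O}
    {x y : Letter D} {α β : List (Letter D)}
    (h : rlt (x::α) (y::β)) : orig x < orig y ∨ orig x = orig y := by
  rcases h with h | ⟨h1, _⟩
  · exact Or.inl h
  · exact Or.inr h1

private lemma suffix_append_cases {A : Type*} {β l₁ l₂ : List A} (h : β <:+ l₁ ++ l₂) :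
    β <:+ l₂ ∨ ∃ γ, γ <:+ l₁ ∧ β = γ ++ l₂ := by
  obtain ⟨t, ht⟩ := h
  rcases List.append_eq_append_iff.mp ht with ⟨a, ha1, ha2⟩ | ⟨c, _, hc2⟩
  · exact Or.inr ⟨a, ⟨t, ha1.symm⟩, ha2⟩
  · exact Or.inl ⟨c, hc2.symm⟩

/-- If `w₁` and `w₂` are prime words with `w₁ ⪰_r w₂`, then the
concatenation `w = w₁w₂` is also a prime word and `w ≻_r w₁ ⪰_r w₂`. -/
theorem primeWord_append {O : Type*} [LinearOrder O] [WellFoundedLT O] {D : Set O}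
    (w₁ w₂ : List (Letter D)) (h₁ : IsPrimeWord w₁) (h₂ : IsPrimeWord w₂)
    (hle : w₂ = w₁ ∨ rlt w₂ w₁) :
    IsPrimeWord (w₁ ++ w₂) ∧ rlt w₁ (w₁ ++ w₂) ∧ (w₂ = w₁ ∨ rlt w₂ w₁) := by
  obtain ⟨hne₁, _, hgs₁⟩ := h₁
  obtain ⟨hne₂, _, hgs₂⟩ := h₂
  obtain ⟨a, t₁, rfl⟩ := List.exists_cons_of_ne_nil hne₁
  obtain ⟨b, t₂, rfl⟩ := List.exists_cons_of_ne_nil hne₂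
  have hba : orig b < orig a ∨ orig b = orig a := by
    rcases hle with h | h
    · right; injection h with h _; rw [h]
    · exact head_le_of_rlt h
  have hlen₂ : (b :: t₂).length ≤ (a :: t₁ ++ b :: t₂).length := by
    simp; omega
  refine ⟨⟨by simp, List.suffix_refl _, ?_⟩, ?_, hle⟩
  · intro β hβ hne
    rcases suffix_append_cases hβ with hs | ⟨γ, hγ, rfl⟩
    · -- β a suffix of w₂
      have hlen : β.length < (a :: t₁ ++ b :: t₂).length := by
        have := hs.length_le
        simp only [List.length_append, List.length_cons] at this ⊢
        omega
      rcases β with _ | ⟨c, δ⟩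
      · trivial
      · have hcb : orig c < orig b ∨ orig c = orig b := by
          by_cases h : c :: δ = b :: t₂
          · right; injection h with h _; rw [h]
          · exact head_le_of_rlt (hgs₂ _ hs h)
        refine rlt_of_head_len ?_
        rcases hcb with h | h
        · rcases hba with h' | h'
          · exact Or.inl (h.trans h')
          · exact Or.inl (h' ▸ h)
        · rcases hba with h' | h'
          · exact Or.inl (h ▸ h')
          · exact Or.inr ⟨h.trans h', hlen⟩
    · -- β = γ ++ w₂ with γ suffix of w₁
      rcases γ with _ | ⟨c, δ⟩
      · -- γ empty: β = w₂
        simp only [List.nil_append]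
        refine rlt_of_head_len ?_
        have : (b :: t₂).length < (a :: t₁ ++ b :: t₂).length := by simp
        rcases hba with h | h
        · exact Or.inl h
        · exact Or.inr ⟨h, this⟩
      · have hγne : c :: δ ≠ a :: t₁ := by
          intro h; exact hne (by rw [h])
        have hγlen : (c :: δ).length < (a :: t₁).length :=
          lt_of_le_of_ne hγ.length_le (fun h => hγne (hγ.eq_of_length h))
        have hca : orig c < orig a ∨ orig c = orig a :=
          head_le_of_rlt (hgs₁ _ hγ hγne)
        refine rlt_of_head_len ?_
        rcases hca with h | h
        · exact Or.inl h
        · refine Or.inr ⟨h, ?_⟩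
          simp only [List.cons_append, List.length_cons, List.length_append,
            List.append_eq] at hγlen ⊢
          omega
  · refine rlt_of_head_len (Or.inr ⟨rfl, ?_⟩)
    simp
end

section
/- There exist an alphabet X = {x, y} with x ≺ y and a proper ideal I of the augmented free algebra k⟨X⟩ contained in the augmentation ideal (namely the ideal generated by y − x²) such that the word xy is I-irreducible while its suffix y is I-reducible. Hence suffixes of irreducible words need not be irreducible. -/
/-- The free algebra `k⟨X⟩` on the alphabet `X = O ∪ D*`, realized as the monoid algebra of
the free monoid on `X`. -/
abbrev FA (k : Type*) [Field k] {O : Type*} (D : Set O) : Type _ :=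
  MonoidAlgebra k (FreeMonoid (Letter D))

/-- The word `w ∈ ⟨X⟩` viewed as a basis element of the free algebra `k⟨X⟩`. -/
noncomputable def wsingle (k : Type*) [Field k] {O : Type*} {D : Set O} (w : List (Letter D)) : FA k D :=
  MonoidAlgebra.single (FreeMonoid.ofList w) 1

/-- The augmentation `ε : k⟨X⟩ → k` with `ε(X) = 0` (each letter is sent to `0`). -/
noncomputable def aug (k : Type*) [Field k] {O : Type*} (D : Set O) : FA k D →ₐ[k] k :=
  MonoidAlgebra.lift k k (FreeMonoid (Letter D)) (FreeMonoid.lift fun _ => (0 : k))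

/-- `ω` is the leading word `LW(f)` of `f`: the `≺_r`-greatest word appearing in `f` with a
non-zero coefficient. -/
def IsLeadingWord {k : Type*} [Field k] {O : Type*} [LinearOrder O] {D : Set O}
    (f : FA k D) (ω : List (Letter D)) : Prop :=
  FreeMonoid.ofList ω ∈ f.coeff.support ∧
    ∀ β ∈ f.coeff.support, FreeMonoid.toList β ≠ ω → rlt (FreeMonoid.toList β) ω

/-- A word `ω` is `I`-reducible if `ω = LW(f)` for some `f ∈ I`; otherwise `ω` is
`I`-irreducible. -/
def IsReducible {k : Type*} [Field k] {O : Type*} [LinearOrder O] {D : Set O}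
    (I : Ideal (FA k D)) (ω : List (Letter D)) : Prop :=
  ∃ f ∈ I, IsLeadingWord f ω


section Aux

open Polynomial

variable (k : Type*) [Field k]

local notation "xx" => (Sum.inl 0 : Letter (∅ : Set (Fin 2)))
local notation "yy" => (Sum.inl 1 : Letter (∅ : Set (Fin 2)))

lemma letter_eq_inl (a : Letter (∅ : Set (Fin 2))) : a = Sum.inl (orig a) := by
  cases a with
  | inl b => rfl
  | inr b => exact absurd b.2 (Set.notMem_empty _)

lemma orig_x : orig xx = 0 := rfl
lemma orig_y : orig yy = 1 := rfl

/-- The weight monoid hom `⟨X⟩ →* k[t]`, `x ↦ t`, `y ↦ t²`. -/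
noncomputable def Wt : FreeMonoid (Letter (∅ : Set (Fin 2))) →* Polynomial k :=
  FreeMonoid.lift fun a => Polynomial.X ^ ((orig a).val + 1)

/-- The evaluation `k⟨x,y⟩ →ₐ k[t]`, `x ↦ t`, `y ↦ t²`. -/
noncomputable def phi : FA k (∅ : Set (Fin 2)) →ₐ[k] Polynomial k :=
  MonoidAlgebra.lift k _ _ (Wt k)

lemma Wt_ofList (w : List (Letter (∅ : Set (Fin 2)))) :
    Wt k (FreeMonoid.ofList w) = (w.map fun a => Polynomial.X ^ ((orig a).val + 1)).prod :=
  FreeMonoid.lift_ofList _ w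

lemma phi_g : phi k (wsingle k [yy] - wsingle k [xx, xx]) = 0 := by
  simp only [map_sub, phi, wsingle, MonoidAlgebra.lift_single, one_smul, Wt_ofList,
    List.map, List.prod_cons, List.prod_nil]
  norm_num [orig_x, orig_y, pow_succ]

lemma precX_not_xx : ¬ precX xx xx := by
  rintro (h | ⟨_, _, h⟩) <;> simp_all

lemma precX_to_y (b : Letter (∅ : Set (Fin 2))) (h : precX b yy) : b = xx := by
  rcases h with h | ⟨_, _, h⟩
  · have := letter_eq_inl b
    have h0 : orig b = 0 := by omega
    rw [h0] at this; exact this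
  · simp at h

lemma rlt_xy (w : List (Letter (∅ : Set (Fin 2)))) (h : rlt w [xx, yy]) :
    w = [] ∨ w = [xx] ∨ w = [xx, xx] := by
  match w with
  | [] => exact Or.inl rfl
  | a :: t =>
    rcases h with h | ⟨ha, h⟩
    · exact absurd h (by simp [orig_x])
    · have hax : a = xx := by
        have := letter_eq_inl a
        rw [ha] at this; exact this
      subst hax
      rcases h with h | ⟨hl, h⟩
      · simp only [List.length_cons, List.length] at h
        have ht : t.length = 0 := by omega
        right; left; simp [List.length_eq_zero_iff.mp ht]
      · simp only [List.length_cons, List.length] at hl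
        have ht : t.length = 1 := by omega
        obtain ⟨b, rfl⟩ : ∃ b, t = [b] := by
          match t, ht with
          | [b], _ => exact ⟨b, rfl⟩
        right; right
        cases h with
        | rel hr => exact absurd hr precX_not_xx
        | cons h' =>
          cases h' with
          | rel hr => rw [precX_to_y b hr]  -- wrong: no k arg
          | cons h'' => cases h''

lemma Wt_eq_pow (w : List (Letter (∅ : Set (Fin 2)))) :
    Wt k (FreeMonoid.ofList w) = Polynomial.X ^ (w.map fun a => (orig a).val + 1).sum := by
  rw [Wt_ofList]
  induction w with
  | nil => simp
  | cons a t ih =>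
    simp only [List.map_cons, List.prod_cons, List.sum_cons]
    rw [ih, pow_add, pow_add]
    ring

set_option maxHeartbeats 1000000 in
lemma coeff3_phi (f : FA k (∅ : Set (Fin 2)))
    (hs : ∀ β ∈ f.coeff.support, FreeMonoid.toList β = [xx, yy] ∨ FreeMonoid.toList β = [] ∨
      FreeMonoid.toList β = [xx] ∨ FreeMonoid.toList β = [xx, xx])
    (hmem : FreeMonoid.ofList [xx, yy] ∈ f.coeff.support) :
    (phi k f).coeff 3 = f.coeff (FreeMonoid.ofList [xx, yy]) := by
  rw [phi, MonoidAlgebra.lift_apply, Finsupp.sum, Polynomial.finset_sum_coeff]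
  rw [Finset.sum_eq_single_of_mem _ hmem]
  · rw [Wt_eq_pow]
    simp [orig_x, orig_y, Polynomial.coeff_smul]
  · intro β hβ hne
    have hW : ∀ w : List (Letter (∅ : Set (Fin 2))), FreeMonoid.toList β = w →
        Wt k β = Polynomial.X ^ (w.map fun a => (orig a).val + 1).sum := by
      intro w hw
      rw [← FreeMonoid.ofList_toList β, hw, Wt_eq_pow]
    rcases hs β hβ with h | h | h | h
    · exact absurd (by rw [← FreeMonoid.ofList_toList β, h]) hne
    all_goals rw [hW _ h]
    all_goals simp [orig_x, orig_y, Polynomial.coeff_smul, Polynomial.coeff_X_pow,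
      Polynomial.coeff_one, Polynomial.coeff_X]

end Aux

set_option maxHeartbeats 1000000 in
/-- There is an alphabet `X = {x, y}` with `x ≺ y` (here `O = Fin 2`,
`D = ∅`, `x = 0`, `y = 1`) and a proper ideal `I` of the augmented free algebra `k⟨X⟩`
contained in the augmentation ideal — namely the two-sided ideal generated by `y − x²` — such
that the word `xy` is `I`-irreducible while its suffix `y` is `I`-reducible. -/
theorem suffix_of_irreducible_not_irreducible (k : Type*) [Field k] :
    let x : Letter (∅ : Set (Fin 2)) := Sum.inl 0
    let y : Letter (∅ : Set (Fin 2)) := Sum.inl 1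
    let g : FA k (∅ : Set (Fin 2)) := wsingle k [y] - wsingle k [x, x]
    let I : Ideal (FA k (∅ : Set (Fin 2))) :=
      Ideal.span {h | ∃ a b : FA k (∅ : Set (Fin 2)), h = a * g * b}
    (∀ a ∈ I, ∀ b : FA k (∅ : Set (Fin 2)), a * b ∈ I) ∧
      I ≠ ⊤ ∧ (∀ f ∈ I, aug k (∅ : Set (Fin 2)) f = 0) ∧
      ¬ IsReducible I [x, y] ∧ IsReducible I [y] := by
  intro x y g I
  have hgI : g ∈ I := Ideal.subset_span ⟨1, 1, by rw [one_mul, mul_one]⟩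
  -- any algebra hom killing g kills I
  have key : ∀ {A : Type _} [CommRing A] [Algebra k A] (φ : FA k (∅ : Set (Fin 2)) →ₐ[k] A),
      φ g = 0 → ∀ f ∈ I, φ f = 0 := by
    intro A _ _ φ hφg f hf
    refine Submodule.span_induction ?_ ?_ ?_ ?_ hf
    · rintro h ⟨a, b, rfl⟩
      simp [map_mul, hφg]
    · simp
    · intro u v _ _ hu hv; simp [map_add, hu, hv]
    · intro c u _ hu
      rw [smul_eq_mul, map_mul, hu, mul_zero]
  -- right ideal property
  have hright : ∀ a ∈ I, ∀ b : FA k (∅ : Set (Fin 2)), a * b ∈ I := by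
    intro a ha b
    refine Submodule.span_induction (p := fun a _ => a * b ∈ I) ?_ ?_ ?_ ?_ ha
    · rintro h ⟨a', b', rfl⟩
      exact Ideal.subset_span ⟨a', b' * b, by rw [mul_assoc]⟩
    · show (0 : FA k (∅ : Set (Fin 2))) * b ∈ I
      rw [zero_mul]; exact I.zero_mem
    · intro u v _ _ hu hv
      show (u + v) * b ∈ I
      rw [add_mul]; exact I.add_mem hu hv
    · intro c u _ hu
      show (c • u) * b ∈ I
      rw [smul_mul_assoc]; exact I.smul_mem c hu
  -- augmentation kills g
  have haugg : aug k (∅ : Set (Fin 2)) g = 0 := by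
    simp only [g, map_sub, aug, wsingle, MonoidAlgebra.lift_single, one_smul,
      FreeMonoid.lift_ofList]
    simp
  have haug : ∀ f ∈ I, aug k (∅ : Set (Fin 2)) f = 0 := key _ haugg
  have hne : I ≠ ⊤ := by
    intro htop
    have h1 : (1 : FA k (∅ : Set (Fin 2))) ∈ I := htop ▸ Submodule.mem_top
    have := haug 1 h1
    rw [map_one] at this
    exact one_ne_zero this
  refine ⟨hright, hne, haug, ?_, ?_⟩
  · -- [x, y] is irreducible
    rintro ⟨f, hfI, hmem, hlead⟩
    have hφ : phi k f = 0 := key _ (phi_g k) f hfI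
    have hc : (phi k f).coeff 3 = f.coeff (FreeMonoid.ofList [x, y]) := by
      refine coeff3_phi k f ?_ hmem
      intro β hβ
      by_cases h : FreeMonoid.toList β = [x, y]
      · exact Or.inl h
      · exact Or.inr (rlt_xy _ (hlead β hβ h))
    rw [hφ, Polynomial.coeff_zero] at hc
    exact Finsupp.mem_support_iff.mp hmem hc.symm
  · -- [y] is reducible, witnessed by g itself
    refine ⟨g, hgI, ?_, ?_⟩
    · rw [Finsupp.mem_support_iff]
      have h1 : (MonoidAlgebra.single (FreeMonoid.ofList [y]) (1 : k) : FA k (∅ : Set (Fin 2))).coeff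
          (FreeMonoid.ofList [y]) = 1 := Finsupp.single_eq_same
      have h2 : (MonoidAlgebra.single (FreeMonoid.ofList [x, x]) (1 : k) : FA k (∅ : Set (Fin 2))).coeff
          (FreeMonoid.ofList [y]) = 0 :=
        Finsupp.single_eq_of_ne (fun h => by
          have := congrArg List.length (congrArg FreeMonoid.toList h); simp at this)
      have : g.coeff (FreeMonoid.ofList [y]) = 1 := by
        show (MonoidAlgebra.single (FreeMonoid.ofList [y]) (1 : k)
            - MonoidAlgebra.single (FreeMonoid.ofList [x, x]) (1 : k) : FA k (∅ : Set (Fin 2))).coeff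
            (FreeMonoid.ofList [y]) = 1
        rw [MonoidAlgebra.coeff_sub, Finsupp.sub_apply, h1, h2, sub_zero]
      rw [this]; exact one_ne_zero
    · intro β hβ hne'
      have hsup : β = FreeMonoid.ofList [y] ∨ β = FreeMonoid.ofList [x, x] := by
        by_contra hcon
        push_neg at hcon
        have h1 : (MonoidAlgebra.single (FreeMonoid.ofList [y]) (1 : k) : FA k (∅ : Set (Fin 2))).coeff
            β = 0 := Finsupp.single_eq_of_ne (fun h => hcon.1 h)
        have h2 : (MonoidAlgebra.single (FreeMonoid.ofList [x, x]) (1 : k) : FA k (∅ : Set (Fin 2))).coeff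
            β = 0 := Finsupp.single_eq_of_ne (fun h => hcon.2 h)
        have : g.coeff β = 0 := by
          show (MonoidAlgebra.single (FreeMonoid.ofList [y]) (1 : k)
              - MonoidAlgebra.single (FreeMonoid.ofList [x, x]) (1 : k) : FA k (∅ : Set (Fin 2))).coeff
              β = 0
          rw [MonoidAlgebra.coeff_sub, Finsupp.sub_apply, h1, h2, sub_zero]
        exact Finsupp.mem_support_iff.mp hβ this
      rcases hsup with rfl | rfl
      · exact absurd rfl hne'
      · exact Or.inl (by decide)
end

section
/- Let (k⟨X⟩, ε) be the augmented free algebra with ε(X) = 0, I ⊆ ker ε a proper ideal, and y ∈ O an I-irreducible letter. Then y ∉ X^{≺y}·k⟨X⟩ + I, where X^{≺y} = {x ∈ X : x ≺ y}. -/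
/-- Let `(k⟨X⟩, ε)` be the augmented free algebra with `ε(X) = 0`,
`I ⊆ ker ε` a proper (two-sided) ideal, and `y ∈ O` an `I`-irreducible letter.  Then
`y ∉ X^{≺y}·k⟨X⟩ + I`, where `X^{≺y} = {x ∈ X : x ≺ y}` and `X^{≺y}·k⟨X⟩` is the right
ideal spanned by products `x·g` with `x ≺ y`. -/
theorem irreducible_letter_not_mem {k : Type*} [Field k] {O : Type*} [LinearOrder O]
    [WellFoundedLT O] {D : Set O} (I : Ideal (FA k D))
    (hI : ∀ a ∈ I, ∀ b : FA k D, a * b ∈ I)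
    (hproper : I ≠ ⊤) (hker : ∀ f ∈ I, aug k D f = 0)
    (y : O) (hirr : ¬ IsReducible I [Sum.inl y]) :
    wsingle k [Sum.inl y] ∉
      (Submodule.span k {h : FA k D | ∃ (x : Letter D) (g : FA k D),
          precX x (Sum.inl y : Letter D) ∧ h = wsingle k [x] * g}) ⊔
        Submodule.restrictScalars k I := by
  classical
  intro hmem
  rw [Submodule.mem_sup] at hmem
  obtain ⟨s, hs, f, hf, hsf⟩ := hmem
  have hfI : f ∈ I := hf
  -- support of elements of the span consists of words starting with a letter of orig < y
  have hsupp : ∀ s' ∈ Submodule.span k {h : FA k D | ∃ (x : Letter D) (g : FA k D),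
      precX x (Sum.inl y : Letter D) ∧ h = wsingle k [x] * g},
      ∀ β ∈ s'.coeff.support, ∃ (x : Letter D) (t : List (Letter D)),
      FreeMonoid.toList β = x :: t ∧ orig x < y := by
    intro s' hs'
    induction hs' using Submodule.span_induction with
    | mem h hh =>
        obtain ⟨x, g, hx, rfl⟩ := hh
        intro β hβ
        have hx' : orig x < y := by
          rcases hx with h1 | h2
          · exact h1
          · simp [orig] at h2
        have := MonoidAlgebra.support_coeff_single_mul_subset g (1 : k) (FreeMonoid.ofList [x]) hβ
        obtain ⟨b, _, rfl⟩ := Finset.mem_image.mp this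
        exact ⟨x, FreeMonoid.toList b, rfl, hx'⟩
    | zero => simp
    | add a b _ _ ha hb =>
        intro β hβ
        rcases Finset.mem_union.mp (Finsupp.support_add hβ) with h | h
        · exact ha β h
        · exact hb β h
    | smul c a _ ha =>
        intro β hβ
        exact ha β (Finsupp.support_smul hβ)
  -- coefficient of [y] in s is 0
  have hsy : s.coeff (FreeMonoid.ofList [Sum.inl y]) = 0 := by
    by_contra h
    obtain ⟨x, t, ht, hx⟩ := hsupp s hs _ (Finsupp.mem_support_iff.mpr h)
    have hxy : (x : Letter D) = Sum.inl y := by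
      have := congrArg (fun l => l.head?) ht
      simpa using this.symm
    subst hxy
    simp [orig] at hx
  have hfeq : f = wsingle k [Sum.inl y] - s := by
    rw [eq_sub_iff_add_eq, add_comm]; exact hsf
  apply hirr
  refine ⟨f, hfI, ?_, ?_⟩
  · rw [Finsupp.mem_support_iff, hfeq, MonoidAlgebra.coeff_sub, Finsupp.sub_apply, hsy, sub_zero, wsingle, MonoidAlgebra.coeff_single,
      Finsupp.single_eq_same]
    exact one_ne_zero
  · intro β hβ hne
    have hβs : β ∈ s.coeff.support := by
      rw [Finsupp.mem_support_iff] at hβ ⊢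
      intro h0
      apply hβ
      rw [hfeq, MonoidAlgebra.coeff_sub, Finsupp.sub_apply, h0, sub_zero, wsingle, MonoidAlgebra.coeff_single]
      refine Finsupp.single_eq_of_ne ?_
      intro h
      exact hne (by rw [h]; rfl)
    obtain ⟨x, t, ht, hx⟩ := hsupp s hs β hβs
    rw [ht]
    exact Or.inl hx
end

section
/- Let (A, ε_A) be an augmented k-algebra with generating set X = O ∪ D* contained in ker ε_A, π : k⟨X⟩ → A the canonical projection, and I = ker π. If A is right Noetherian, then the set X_I ∩ O of I-irreducible letters lying in O is finite. -/
/-- Letters with equal `orig` that are both "left" (i.e. in `O`) are equal. -/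
lemma left_orig_injective {O : Type*} {D : Set O} {a b : Letter D}
    (ha : a.isLeft = true) (hb : b.isLeft = true) (h : orig a = orig b) : a = b := by
  cases a with
  | inl a =>
    cases b with
    | inl b => simpa [orig] using h
    | inr b => simp at hb
  | inr a => simp at ha

/-- Key lemma: if the image of a letter `x` is a right `A`-linear combination of images of
letters whose `orig` is strictly smaller, then `[x]` is `I`-reducible. -/
lemma key_reducible {k : Type*} [Field k] {O : Type*} [LinearOrder O] {D : Set O}
    {A : Type*} [Ring A] [Algebra k A] (π : FA k D →ₐ[k] A) (hsurj : Function.Surjective π)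
    {ι : Type*} (s : Finset ι) (y : ι → Letter D) (x : Letter D)
    (hy : ∀ i ∈ s, orig (y i) < orig x) (c : ι → A)
    (hmem : π (wsingle k [x]) = ∑ i ∈ s, π (wsingle k [y i]) * c i) :
    IsReducible (RingHom.ker π.toRingHom) [x] := by
  classical
  choose g hg using hsurj
  set Sm : FA k D := ∑ i ∈ s, wsingle k [y i] * g (c i) with hSm
  -- every word in the support of `Sm` starts with some `y i`, `i ∈ s`
  have hsupp : ∀ β ∈ Sm.coeff.support, ∃ i ∈ s, ∃ γ : FreeMonoid (Letter D),
      β = FreeMonoid.ofList [y i] * γ := by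
    intro β hβ
    rw [hSm, MonoidAlgebra.coeff_sum] at hβ
    have := Finsupp.support_finset_sum hβ
    obtain ⟨i, hi, hβi⟩ := Finset.mem_biUnion.mp this
    have := MonoidAlgebra.support_coeff_single_mul_subset (g (c i)) (1 : k)
      (FreeMonoid.ofList [y i]) hβi
    obtain ⟨γ, _, rfl⟩ := Finset.mem_image.mp this
    exact ⟨i, hi, γ, rfl⟩
  have hx_notin : Sm.coeff (FreeMonoid.ofList [x]) = 0 := by
    by_contra h
    obtain ⟨i, hi, γ, hγ⟩ := hsupp _ (Finsupp.mem_support_iff.mpr h)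
    have : ([x] : List (Letter D)) = y i :: FreeMonoid.toList γ := congrArg FreeMonoid.toList hγ
    have hyx : y i = x := (List.cons.injEq _ _ _ _ ▸ this.symm).1
    exact absurd (hy i hi) (by rw [hyx]; exact lt_irrefl _)
  refine ⟨wsingle k [x] - Sm, ?_, ?_, ?_⟩
  · -- it lies in the kernel
    have : π (wsingle k [x] - Sm) = 0 := by
      rw [map_sub, hSm, map_sum, hmem]
      simp [hg]
    simpa [RingHom.mem_ker] using this
  · -- `ofList [x]` is in the support
    rw [Finsupp.mem_support_iff]
    have : (wsingle k [x] - Sm).coeff (FreeMonoid.ofList [x]) = 1 := by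
      rw [MonoidAlgebra.coeff_sub, Finsupp.sub_apply, hx_notin, sub_zero, wsingle, MonoidAlgebra.coeff_single, Finsupp.single_apply,
        if_pos rfl]
    rw [this]; exact one_ne_zero
  · -- every other word in the support is `≺_r [x]`
    intro β hβ hne
    have hβ' : β ∈ Sm.coeff.support := by
      have := Finsupp.support_sub (f := (wsingle k [x]).coeff) (g := Sm.coeff)
          (by rwa [MonoidAlgebra.coeff_sub] at hβ)
      rcases Finset.mem_union.mp this with h | h
      · exfalso
        have := Finsupp.support_single_subset h
        rw [Finset.mem_singleton] at this
        exact hne (by rw [this, FreeMonoid.toList_ofList])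
      · exact h
    obtain ⟨i, hi, γ, rfl⟩ := hsupp _ hβ'
    have : FreeMonoid.toList (FreeMonoid.ofList [y i] * γ) = y i :: FreeMonoid.toList γ := rfl
    rw [this]
    exact Or.inl (hy i hi)

/-- Any infinite set in a well-ordered linear order admits a sequence of members with strictly
increasing values. -/
lemma exists_strictMono_seq_of_infinite {O : Type*} [LinearOrder O] [WellFoundedLT O]
    {α : Type*} {S : Set α} (hS : S.Infinite) (v : α → O)
    (hv : ∀ a ∈ S, ∀ b ∈ S, v a = v b → a = b) :
    ∃ e : ℕ → α, (∀ n, e n ∈ S) ∧ ∀ m n, m < n → v (e m) < v (e n) := by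
  classical
  let u : ℕ ↪ S := hS.natEmbedding
  have huinj : ∀ m n : ℕ, v (u m : α) = v (u n : α) → m = n := by
    intro m n h
    exact u.injective (Subtype.ext_iff.mpr (hv _ (u m).2 _ (u n).2 h))
  obtain ⟨g, hg | hg⟩ :=
    exists_increasing_or_nonincreasing_subseq ((· < ·) : O → O → Prop) (fun n => v (u n : α))
  · exact ⟨fun n => (u (g n) : α), fun n => (u (g n)).2, fun m n hmn => hg m n hmn⟩
  · exfalso
    have hdec : ∀ n : ℕ, v (u (g (n + 1)) : α) < v (u (g n) : α) := by
      intro n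
      have h1 : ¬ v (u (g n) : α) < v (u (g (n + 1)) : α) := hg n (n + 1) (Nat.lt_succ_self n)
      have h2 : v (u (g (n + 1)) : α) ≠ v (u (g n) : α) := by
        intro h
        have heq := huinj _ _ h
        have hlt : g n < g (n + 1) := g.strictMono (Nat.lt_succ_self n)
        omega
      exact lt_of_le_of_ne (not_lt.mp h1) h2
    exact (RelEmbedding.wellFounded_iff_isEmpty.mp (IsWellFounded.wf)).false
      (RelEmbedding.natGT (fun n => v (u (g n) : α)) hdec)

/-- Let `(A, ε_A)` be an augmented `k`-algebra generated by a well-ordered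
set `X = O ∪ D*` contained in `ker ε_A`, let `π : k⟨X⟩ → A` be the canonical projection
(an algebra surjection sending each letter into `ker ε_A`) and `I = ker π`.  If `A` is right
Noetherian, then the set `X_I ∩ O` of `I`-irreducible letters lying in `O` is finite. -/
theorem noetherian_finitely_many_irreducible_letters {k : Type*} [Field k] {O : Type*}
    [LinearOrder O] [WellFoundedLT O] {D : Set O}
    {A : Type*} [Ring A] [Algebra k A] (εA : A →ₐ[k] k) (π : FA k D →ₐ[k] A)
    (hsurj : Function.Surjective π)
    (hX : ∀ x : Letter D, εA (π (wsingle k [x])) = 0)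
    (hnoeth : IsNoetherianRing Aᵐᵒᵖ) :
    {x : Letter D | x.isLeft = true ∧
      ¬ IsReducible (RingHom.ker π.toRingHom) [x]}.Finite := by
  classical
  by_contra hfin
  have hS : {x : Letter D | x.isLeft = true ∧
      ¬ IsReducible (RingHom.ker π.toRingHom) [x]}.Infinite := hfin
  obtain ⟨e, heS, hemono⟩ := exists_strictMono_seq_of_infinite hS orig
    (fun a ha b hb h => left_orig_injective ha.1 hb.1 h)
  -- the chain of right ideals
  set Φ : ℕ → Aᵐᵒᵖ := fun n => MulOpposite.op (π (wsingle k [e n])) with hΦ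
  have hmonoc : Monotone fun n : ℕ => Ideal.span (Set.range fun i : Fin n => Φ i) := by
    intro m n hmn
    apply Ideal.span_mono
    rintro _ ⟨i, rfl⟩
    exact ⟨Fin.castLE hmn i, rfl⟩
  set c : ℕ →o Ideal Aᵐᵒᵖ :=
    ⟨fun n => Ideal.span (Set.range fun i : Fin n => Φ i), hmonoc⟩ with hc
  have hN : IsNoetherian Aᵐᵒᵖ Aᵐᵒᵖ := hnoeth
  obtain ⟨n, hn⟩ := monotone_stabilizes_iff_noetherian.mpr hN c
  have hmem1 : Φ n ∈ c (n + 1) :=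
    Ideal.subset_span ⟨⟨n, Nat.lt_succ_self n⟩, rfl⟩
  have hmem : Φ n ∈ c n := by
    rw [hn (n + 1) (Nat.le_succ n)]; exact hmem1
  rw [hc] at hmem
  simp only [OrderHom.coe_mk] at hmem
  obtain ⟨d, hd⟩ := (Submodule.mem_span_range_iff_exists_fun Aᵐᵒᵖ).mp hmem
  -- unfold back to `A`
  have hA : π (wsingle k [e n]) = ∑ i : Fin n, π (wsingle k [e i]) * MulOpposite.unop (d i) := by
    have := congrArg MulOpposite.unop hd
    simpa [hΦ, smul_eq_mul] using this.symm
  have hred : IsReducible (RingHom.ker π.toRingHom) [e n] :=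
    key_reducible π hsurj Finset.univ (fun i : Fin n => e i) (e n)
      (fun i _ => hemono i n i.2) (fun i => MulOpposite.unop (d i)) hA
  exact (heS n).2 hred
end

section
/- Let Δ be a skew-triangular comultiplication on the graded free algebra k⟨X⟩ and f a non-empty word with Δ(f) = f ⊗ 1 + [1 − z_f] ⊗ f + Σ f′ ⊗ f″ (f′ non-empty polynomials, f″ non-empty words). Then for every term in the sum: deg(f″) ≤ deg(f), |f″| ≤ |f|, and deg(f″) + |f″| < deg(f) + |f|. -/
section Aux
open TensorProduct
variable {k : Type*} [Field k] {O : Type*} {D : Set O}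

lemma aug_apply (f : FA k D) : aug k D f = f.coeff 1 := by
  induction f using MonoidAlgebra.induction_linear with
  | zero => simp
  | add f g hf hg => simp [map_add, MonoidAlgebra.coeff_add, hf, hg]
  | single w c =>
    show (MonoidAlgebra.lift k k (FreeMonoid (Letter D)) (FreeMonoid.lift fun _ => (0 : k)))
      (MonoidAlgebra.single w c) = _
    rw [MonoidAlgebra.lift_single, FreeMonoid.lift_apply]
    rcases h : FreeMonoid.toList w with _ | ⟨a, l⟩
    · have hw : w = 1 := by
        have := congrArg FreeMonoid.ofList h
        simpa using this
      subst hw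
      simp [MonoidAlgebra.coeff_single, Finsupp.single_apply]
    · have hw : w ≠ 1 := by
        intro hh; subst hh; simp at h
      simp [h, MonoidAlgebra.coeff_single, Finsupp.single_apply, hw]

lemma coeff1_mul (a b : FA k D) : (a * b).coeff 1 = a.coeff 1 * b.coeff 1 := by
  rw [← aug_apply, ← aug_apply, ← aug_apply, map_mul]

lemma wsingle_mul_cons (y : Letter D) (l : List (Letter D)) :
    wsingle k [y] * wsingle k l = wsingle k (y :: l) := by
  rw [wsingle, wsingle, wsingle, MonoidAlgebra.single_mul_single, one_mul]
  rfl

lemma wsingle_coeff1 (w : List (Letter D)) (hw : w ≠ []) : (wsingle k w).coeff 1 = 0 := by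
  rw [wsingle, MonoidAlgebra.coeff_single]
  apply Finsupp.single_eq_of_ne'
  intro h
  apply hw
  have := congrArg FreeMonoid.toList h
  simpa using this

def RepT (P : FA k D → List (Letter D) → Prop) (T : FA k D ⊗[k] FA k D) : Prop :=
  ∃ (n : ℕ) (f' : Fin n → FA k D) (f'' : Fin n → List (Letter D)),
    T = ∑ i, f' i ⊗ₜ[k] wsingle k (f'' i) ∧ ∀ i, P (f' i) (f'' i)

lemma RepT.zero (P : FA k D → List (Letter D) → Prop) : RepT P 0 :=
  ⟨0, Fin.elim0, Fin.elim0, by simp, fun i => i.elim0⟩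

lemma RepT.tmul {P : FA k D → List (Letter D) → Prop} {a : FA k D} {w : List (Letter D)}
    (h : P a w) : RepT P (a ⊗ₜ[k] wsingle k w) :=
  ⟨1, fun _ => a, fun _ => w, by simp, fun _ => h⟩

lemma RepT.add {P : FA k D → List (Letter D) → Prop} {T₁ T₂ : FA k D ⊗[k] FA k D}
    (h₁ : RepT P T₁) (h₂ : RepT P T₂) : RepT P (T₁ + T₂) := by
  obtain ⟨n₁, a₁, b₁, rfl, hp₁⟩ := h₁
  obtain ⟨n₂, a₂, b₂, rfl, hp₂⟩ := h₂
  refine ⟨n₁ + n₂, Fin.append a₁ a₂, Fin.append b₁ b₂, ?_, ?_⟩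
  · rw [Fin.sum_univ_add]
    simp [Fin.append_left, Fin.append_right]
  · intro i
    refine Fin.addCases ?_ ?_ i
    · intro j; simpa [Fin.append_left] using hp₁ j
    · intro j; simpa [Fin.append_right] using hp₂ j

lemma RepT.sum {ι : Type*} {P : FA k D → List (Letter D) → Prop} (s : Finset ι)
    (T : ι → FA k D ⊗[k] FA k D) (h : ∀ i ∈ s, RepT P (T i)) : RepT P (∑ i ∈ s, T i) :=
  Finset.sum_induction T (RepT P) (fun _ _ => RepT.add) (RepT.zero P) h

end Aux

set_option maxHeartbeats 1600000 in
open TensorProduct in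
/-- Let `t : X → ℕ` grade `k⟨X⟩` (with `t(x*) = t(x)` for `x ∈ D`), and let
`Δ` be a skew-triangular comultiplication on `k⟨X⟩`: for each letter `x` there are `z_x ∈ X₀`,
polynomials `x′ ∈ k⟨X⟩⁺` and letters `x″ ≺ x` with `t(x″) < t(x)` such that
`Δ(x) = x ⊗ 1 + (1 − z_x) ⊗ x + Σ x′ ⊗ x″` (and `z_{x₀} = x₀` for `x₀ ∈ X₀`).  Then every
non-empty word `f` satisfies `Δ(f) = f ⊗ 1 + [1 − z_f] ⊗ f + Σ f′ ⊗ f″` for a family of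
terms with `f′ ∈ k⟨X⟩⁺`, `f″` non-empty words, and for every term in the sum
`deg(f″) ≤ deg(f)`, `|f″| ≤ |f|` and `deg(f″) + |f″| < deg(f) + |f|`. -/
theorem skewTriangular_comul_degree_bounds {k : Type*} [Field k] {O : Type*} [LinearOrder O]
    [WellFoundedLT O] {D : Set O}
    (t : Letter D → ℕ) (ht : ∀ d : {x : O // x ∈ D}, t (Sum.inr d) = t (Sum.inl d.1))
    (Δ : FA k D →ₐ[k] (FA k D ⊗[k] FA k D))
    (z : Letter D → Letter D) (hz0 : ∀ x, t (z x) = 0) (hzfix : ∀ x, t x = 0 → z x = x)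
    (hΔ : ∀ x : Letter D, ∃ (n : ℕ) (x' : Fin n → FA k D) (x'' : Fin n → Letter D),
      Δ (wsingle k [x]) = wsingle k [x] ⊗ₜ[k] 1
          + ((1 : FA k D) - wsingle k [z x]) ⊗ₜ[k] wsingle k [x]
          + ∑ i, x' i ⊗ₜ[k] wsingle k [x'' i] ∧
        ∀ i, t (x'' i) < t x ∧ precX (x'' i) x ∧ (x' i).coeff (1 : FreeMonoid (Letter D)) = 0) :
    ∀ f : List (Letter D), f ≠ [] →
      ∃ (n : ℕ) (f' : Fin n → FA k D) (f'' : Fin n → List (Letter D)),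
        Δ (wsingle k f) = wsingle k f ⊗ₜ[k] 1
            + (f.map fun a => (1 : FA k D) - wsingle k [z a]).prod ⊗ₜ[k] wsingle k f
            + ∑ i, f' i ⊗ₜ[k] wsingle k (f'' i) ∧
          ∀ i, f'' i ≠ [] ∧ (f' i).coeff (1 : FreeMonoid (Letter D)) = 0 ∧
            ((f'' i).map t).sum ≤ (f.map t).sum ∧
            (f'' i).length ≤ f.length ∧
            ((f'' i).map t).sum + (f'' i).length < (f.map t).sum + f.length := by
  intro f
  induction f with
  | nil => intro h; exact absurd rfl h
  | cons x g IH =>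
    intro _
    obtain ⟨n, x', x'', hx, hxp⟩ := hΔ x
    rcases eq_or_ne g [] with rfl | hgne
    · -- base case f = [x]
      refine ⟨n, x', fun i => [x'' i], ?_, ?_⟩
      · rw [hx]; simp
      · intro i
        obtain ⟨h1, _, h3⟩ := hxp i
        refine ⟨by simp, h3, by simp <;> omega, by simp, by simp <;> omega⟩
    · -- inductive step
      obtain ⟨m, g', g'', hg, hgp⟩ := IH hgne
      have hlen : 1 ≤ g.length := List.length_pos_iff.mpr hgne
      have hA1 : (wsingle k [x] : FA k D).coeff 1 = 0 := wsingle_coeff1 [x] (by simp)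
      have hG1 : (wsingle k g : FA k D).coeff 1 = 0 := wsingle_coeff1 g hgne
      have key : Δ (wsingle k (x :: g)) =
          wsingle k (x :: g) ⊗ₜ[k] (1 : FA k D)
          + ((x :: g).map fun a => (1 : FA k D) - wsingle k [z a]).prod ⊗ₜ[k] wsingle k (x :: g)
          + ((wsingle k [x] * (g.map fun a => (1 : FA k D) - wsingle k [z a]).prod) ⊗ₜ[k] wsingle k g
            + (((1 : FA k D) - wsingle k [z x]) * wsingle k g) ⊗ₜ[k] wsingle k [x]
            + ∑ j, (wsingle k [x] * g' j) ⊗ₜ[k] wsingle k (g'' j)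
            + ∑ j, (((1 : FA k D) - wsingle k [z x]) * g' j) ⊗ₜ[k] wsingle k (x :: g'' j)
            + ∑ i, (x' i * wsingle k g) ⊗ₜ[k] wsingle k [x'' i]
            + ∑ i, (x' i * (g.map fun a => (1 : FA k D) - wsingle k [z a]).prod) ⊗ₜ[k] wsingle k (x'' i :: g)
            + ∑ j, ∑ i, (x' i * g' j) ⊗ₜ[k] wsingle k (x'' i :: g'' j)) := by
        rw [← wsingle_mul_cons, map_mul, hx, hg, List.map_cons, List.prod_cons]
        simp only [mul_add, add_mul, Finset.sum_mul, Finset.mul_sum,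
          Algebra.TensorProduct.tmul_mul_tmul, one_mul, mul_one, wsingle_mul_cons,
          Finset.sum_add_distrib]
        abel
      have hrep : RepT (fun a b => b ≠ [] ∧ a.coeff 1 = 0 ∧
          (b.map t).sum ≤ ((x :: g).map t).sum ∧ b.length ≤ (x :: g).length ∧
          (b.map t).sum + b.length < ((x :: g).map t).sum + (x :: g).length)
          ((wsingle k [x] * (g.map fun a => (1 : FA k D) - wsingle k [z a]).prod) ⊗ₜ[k] wsingle k g
            + (((1 : FA k D) - wsingle k [z x]) * wsingle k g) ⊗ₜ[k] wsingle k [x]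
            + ∑ j, (wsingle k [x] * g' j) ⊗ₜ[k] wsingle k (g'' j)
            + ∑ j, (((1 : FA k D) - wsingle k [z x]) * g' j) ⊗ₜ[k] wsingle k (x :: g'' j)
            + ∑ i, (x' i * wsingle k g) ⊗ₜ[k] wsingle k [x'' i]
            + ∑ i, (x' i * (g.map fun a => (1 : FA k D) - wsingle k [z a]).prod) ⊗ₜ[k] wsingle k (x'' i :: g)
            + ∑ j, ∑ i, (x' i * g' j) ⊗ₜ[k] wsingle k (x'' i :: g'' j)) := by
        refine RepT.add (RepT.add (RepT.add (RepT.add (RepT.add (RepT.add ?_ ?_) ?_) ?_) ?_) ?_) ?_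
        · exact RepT.tmul ⟨hgne, by rw [coeff1_mul, hA1, zero_mul],
            by simp, by simp, by simp <;> omega⟩
        · exact RepT.tmul ⟨by simp, by rw [coeff1_mul, hG1, mul_zero],
            by simp, by simp, by simp <;> omega⟩
        · refine RepT.sum _ _ fun j _ => RepT.tmul ?_
          obtain ⟨h1, h2, h3, h4, h5⟩ := hgp j
          exact ⟨h1, by rw [coeff1_mul, hA1, zero_mul], by simp <;> omega, by simp <;> omega,
            by simp <;> omega⟩
        · refine RepT.sum _ _ fun j _ => RepT.tmul ?_
          obtain ⟨h1, h2, h3, h4, h5⟩ := hgp j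
          exact ⟨by simp, by rw [coeff1_mul, h2, mul_zero], by simp <;> omega, by simp <;> omega,
            by simp <;> omega⟩
        · refine RepT.sum _ _ fun i _ => RepT.tmul ?_
          obtain ⟨h1, _, h3⟩ := hxp i
          exact ⟨by simp, by rw [coeff1_mul, h3, zero_mul], by simp <;> omega, by simp <;> omega,
            by simp <;> omega⟩
        · refine RepT.sum _ _ fun i _ => RepT.tmul ?_
          obtain ⟨h1, _, h3⟩ := hxp i
          exact ⟨by simp, by rw [coeff1_mul, h3, zero_mul], by simp <;> omega, by simp <;> omega,
            by simp <;> omega⟩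
        · refine RepT.sum _ _ fun j _ => RepT.sum _ _ fun i _ => RepT.tmul ?_
          obtain ⟨h1, _, h3⟩ := hxp i
          obtain ⟨k1, k2, k3, k4, k5⟩ := hgp j
          exact ⟨by simp, by rw [coeff1_mul, h3, zero_mul], by simp <;> omega, by simp <;> omega,
            by simp <;> omega⟩
      obtain ⟨N, F', F'', hsum, hprop⟩ := hrep
      exact ⟨N, F', F'', by rw [key, hsum], hprop⟩
end
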